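/- For every real α with 1 < α < 2 and every complex number λ: F_α(λ) = (1/(1+α)) Σ_{n=0}^∞ ((−1)^n/n!) λ^n Γ((n+1)/(α+1)) · exp( iπ(2−α)(n+1)/(2(α+1)) ) · (1+α)^{(n+1)/(α+1)}, the series converging for every λ ∈ ℂ. -/

import Mathlib

open scoped Real BigOperators
open MeasureTheory Set Complex

noncomputable section

private lemma intAux {s b : ℝ} (hs : -1 < s) (hb : 0 < b) :
    IntegrableOn (fun t : ℝ => t ^ s * Real.exp (-(b * t))) (Set.Ioi 0) := by
  have := integrableOn_rpow_mul_exp_neg_mul_rpow hs one_pos hb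
  refine this.congr_fun (fun x hx => ?_) measurableSet_Ioi
  beta_reduce
  rw [Real.rpow_one, neg_mul]

private lemma contOnF (a : ℝ) (w : ℂ) :
    ContinuousOn (fun t : ℝ => (t : ℂ) ^ ((a : ℂ) - 1) * Complex.exp (-(w * t))) (Set.Ioi 0) := by
  intro t ht
  refine ContinuousAt.continuousWithinAt ?_
  refine ContinuousAt.mul ?_ ?_
  · exact Complex.continuousAt_ofReal_cpow_const _ _ (Or.inr (ne_of_gt ht))
  · exact (Complex.continuous_exp.comp
      ((continuous_const.mul Complex.continuous_ofReal).neg)).continuousAt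

private lemma normF {a : ℝ} {t : ℝ} (ht : 0 < t) (w : ℂ) :
    ‖(t : ℂ) ^ ((a : ℂ) - 1) * Complex.exp (-(w * t))‖
      = t ^ (a - 1) * Real.exp (-(w.re * t)) := by
  rw [norm_mul,
    Complex.norm_cpow_eq_rpow_re_of_pos ht, Complex.norm_exp]
  congr 2
  · simp

private lemma intF (a : ℝ) (ha : 0 < a) {w : ℂ} (hw : 0 < w.re) :
    IntegrableOn (fun t : ℝ => (t : ℂ) ^ ((a : ℂ) - 1) * Complex.exp (-(w * t)))
      (Set.Ioi 0) := by
  refine Integrable.mono' (intAux (s := a - 1) (b := w.re) (by linarith) hw) ((contOnF a w).aestronglyMeasurable measurableSet_Ioi) ?_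
  filter_upwards [ae_restrict_mem measurableSet_Ioi] with t ht
  rw [normF ht w]

private lemma derivF (a : ℝ) (ha : 0 < a) {w₀ : ℂ} (hw : 0 < w₀.re) :
    HasDerivAt (fun w : ℂ => ∫ t in Set.Ioi (0:ℝ), (t : ℂ) ^ ((a : ℂ) - 1) * Complex.exp (-(w * t)))
      (∫ t in Set.Ioi (0:ℝ), ((t : ℂ) ^ ((a : ℂ) - 1) * (-(t:ℂ))) * Complex.exp (-(w₀ * t))) w₀ := by
  set ε := w₀.re / 2 with hε
  have hε0 : 0 < ε := by positivity
  have key := hasDerivAt_integral_of_dominated_loc_of_deriv_le (μ := volume.restrict (Set.Ioi 0))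
    (F := fun (w : ℂ) (t : ℝ) => (t : ℂ) ^ ((a : ℂ) - 1) * Complex.exp (-(w * t)))
    (F' := fun (w : ℂ) (t : ℝ) => ((t : ℂ) ^ ((a : ℂ) - 1) * (-(t:ℂ))) * Complex.exp (-(w * t)))
    (x₀ := w₀) (s := Metric.ball w₀ ε) (bound := fun t : ℝ => t ^ a * Real.exp (-(ε * t))) (Metric.ball_mem_nhds w₀ hε0) ?_ ?_ ?_ ?_ ?_ ?_
  · exact key.2
  · filter_upwards with w
    exact (contOnF a w).aestronglyMeasurable measurableSet_Ioi
  · exact intF a ha hw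
  · refine ContinuousOn.aestronglyMeasurable ?_ measurableSet_Ioi
    intro t ht
    refine ContinuousAt.continuousWithinAt (ContinuousAt.mul (ContinuousAt.mul ?_ ?_) ?_)
    · exact Complex.continuousAt_ofReal_cpow_const _ _ (Or.inr (ne_of_gt ht))
    · exact (Complex.continuous_ofReal.neg).continuousAt
    · exact (Complex.continuous_exp.comp
        ((continuous_const.mul Complex.continuous_ofReal).neg)).continuousAt
  · filter_upwards [ae_restrict_mem measurableSet_Ioi] with t ht w hwball
    have htp : (0:ℝ) < t := ht
    have hre : ε ≤ w.re := by
      have h1 : |(w - w₀).re| ≤ ‖w - w₀‖ := Complex.abs_re_le_norm _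
      have h2 : ‖w - w₀‖ < ε := by
        rw [Metric.mem_ball, Complex.dist_eq] at hwball; exact hwball
      have := abs_le.mp (le_of_lt (lt_of_le_of_lt h1 h2))
      have : -(ε) ≤ w.re - w₀.re := by simpa [Complex.sub_re] using this.1
      rw [hε] at this ⊢; linarith
    have : ‖(t : ℂ) ^ ((a : ℂ) - 1) * (-(t:ℂ)) * Complex.exp (-(w * t))‖
        = t ^ (a - 1) * t * Real.exp (-(w.re * t)) := by
      rw [norm_mul, norm_mul,
        Complex.norm_cpow_eq_rpow_re_of_pos htp, Complex.norm_exp]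
      simp [abs_of_pos htp]
    rw [this]
    have h3 : t ^ (a - 1) * t = t ^ a := by
      rw [← Real.rpow_add_one htp.ne' (a - 1)]; norm_num
    rw [h3]
    have : Real.exp (-(w.re * t)) ≤ Real.exp (-(ε * t)) :=
      Real.exp_le_exp.mpr (by nlinarith)
    exact mul_le_mul_of_nonneg_left this (Real.rpow_nonneg htp.le a)
  · exact intAux (s := a) (b := ε) (by linarith) hε0
  · filter_upwards with t
    intro w hwball
    have h1 : HasDerivAt (fun w : ℂ => -(w * (t:ℂ))) (-(t:ℂ)) w := by
      exact (((hasDerivAt_id w).mul_const (t:ℂ)).neg).congr_deriv (by simp)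
    have h2 := h1.cexp
    have h3 := h2.const_mul ((t : ℂ) ^ ((a : ℂ) - 1))
    exact h3.congr_deriv (by ring)

private lemma key_integral (a : ℝ) (ha : 0 < a) {w : ℂ} (hw : 0 < w.re) :
    (∫ t in Set.Ioi (0:ℝ), (t : ℂ) ^ ((a : ℂ) - 1) * Complex.exp (-(w * t)))
      = w ^ (-(a : ℂ)) * Complex.Gamma a := by
  set f : ℂ → ℂ := fun w => ∫ t in Set.Ioi (0:ℝ), (t : ℂ) ^ ((a : ℂ) - 1) * Complex.exp (-(w * t))
  set g : ℂ → ℂ := fun w => w ^ (-(a : ℂ)) * Complex.Gamma a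
  set U : Set ℂ := {z : ℂ | 0 < z.re} with hU
  have hUopen : IsOpen U := isOpen_lt continuous_const Complex.continuous_re
  have hUconn : IsPreconnected U := (convex_halfSpace_re_gt 0).isPreconnected
  have hf : AnalyticOnNhd ℂ f U := by
    refine DifferentiableOn.analyticOnNhd (fun z hz => ?_) hUopen
    exact (derivF a ha hz).differentiableAt.differentiableWithinAt
  have hg : AnalyticOnNhd ℂ g U := by
    refine DifferentiableOn.analyticOnNhd (fun z hz => ?_) hUopen
    refine DifferentiableAt.differentiableWithinAt ?_
    have hd : HasDerivAt (fun z : ℂ => z ^ (-(a:ℂ)))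
        (-(a:ℂ) * z ^ (-(a:ℂ) - 1) * 1) z := (hasDerivAt_id z).cpow_const
        (Complex.mem_slitPlane_iff.mpr (Or.inl hz))
    exact hd.differentiableAt.mul_const _
  have h1U : (1 : ℂ) ∈ U := by simp [hU]
  have hfg_real : ∀ r : ℝ, 0 < r → f r = g r := by
    intro r hr
    have := Complex.integral_cpow_mul_exp_neg_mul_Ioi
      (a := (a : ℂ)) (r := r) (by simpa using ha) hr
    simp only [f, g]
    rw [this, Complex.cpow_neg, ← Complex.inv_cpow _ _ (by
      rw [Complex.arg_ofReal_of_nonneg hr.le]; exact Real.pi_ne_zero.symm), one_div]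
  have hfreq : ∃ᶠ z in nhdsWithin 1 {(1:ℂ)}ᶜ, f z = g z := by
    have htend : Filter.Tendsto (fun n : ℕ => ((1 + ((n:ℝ)+1)⁻¹ : ℝ) : ℂ)) Filter.atTop
        (nhdsWithin 1 {(1:ℂ)}ᶜ) := by
      rw [tendsto_nhdsWithin_iff]
      constructor
      · have : Filter.Tendsto (fun n : ℕ => (1 + ((n:ℝ)+1)⁻¹ : ℝ)) Filter.atTop (nhds 1) := by
          have := tendsto_one_div_add_atTop_nhds_zero_nat (𝕜 := ℝ)
          simp only [one_div] at this
          simpa using Filter.Tendsto.const_add 1 this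
        have h2 := (Complex.continuous_ofReal.tendsto (1:ℝ)).comp this
        exact h2
      · filter_upwards with n
        simp only [Set.mem_compl_iff, Set.mem_singleton_iff]
        intro h
        have : (1 + ((n:ℝ)+1)⁻¹ : ℝ) = 1 := by exact_mod_cast h
        have hpos : (0:ℝ) < ((n:ℝ)+1)⁻¹ := by positivity
        linarith
    refine htend.frequently (Filter.Eventually.frequently ?_)
    filter_upwards with n
    exact hfg_real _ (by positivity)
  have := hf.eqOn_of_preconnected_of_frequently_eq hg hUconn h1U hfreq
  exact this hw


/-- `F_α(λ) = ∫_0^∞ e^{−λt} exp(e^{iπα/2} t^{1+α}/(1+α)) dt`. -/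
noncomputable def Fa (α : ℝ) (l : ℂ) : ℂ :=
  ∫ t in Set.Ioi (0 : ℝ),
    Complex.exp (-l * t) *
      Complex.exp (Complex.exp (Complex.I * Real.pi * α / 2) *
        ((t ^ (1 + α) : ℝ) : ℂ) / (1 + α))

set_option maxHeartbeats 1000000 in
/-- For `1 < α < 2` and every `λ ∈ ℂ`,
`F_α(λ) = (1/(1+α)) Σ_{n≥0} ((−1)^n/n!) λ^n Γ((n+1)/(α+1)) e^{iπ(2−α)(n+1)/(2(α+1))} (1+α)^{(n+1)/(α+1)}`,
the series converging for every `λ`. -/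
theorem Fa_series (α : ℝ) (hα₁ : 1 < α) (hα₂ : α < 2) (l : ℂ) :
    HasSum
      (fun n : ℕ =>
        (1 / (1 + (α : ℂ))) * ((-1 : ℂ) ^ n / n.factorial) * l ^ n *
          (Real.Gamma (((n : ℝ) + 1) / (α + 1)) : ℂ) *
          Complex.exp (Complex.I * Real.pi * (2 - α) * ((n : ℝ) + 1) / (2 * (α + 1))) *
          (((1 + α) ^ (((n : ℝ) + 1) / (α + 1)) : ℝ) : ℂ))
      (Fa α l) := by
  have hπ := Real.pi_pos
  set β : ℝ := 1 + α with hβ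
  have hβ0 : (0:ℝ) < β := by rw [hβ]; linarith
  have hβ2 : (2:ℝ) < β := by rw [hβ]; linarith
  set c : ℂ := Complex.exp (Complex.I * Real.pi * α / 2) with hc
  have hc_eq : c = Complex.exp (((Real.pi * α / 2 : ℝ) : ℂ) * Complex.I) := by
    rw [hc]; congr 1; push_cast; ring
  have hcre : c.re = Real.cos (Real.pi * α / 2) := by
    rw [hc_eq]; exact Complex.exp_ofReal_mul_I_re _
  have hcos : Real.cos (Real.pi * α / 2) < 0 := by
    apply Real.cos_neg_of_pi_div_two_lt_of_lt
    · nlinarith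
    · nlinarith
  set w : ℂ := -c with hwdef
  have hwre : 0 < w.re := by
    have : w.re = -c.re := by rw [hwdef, Complex.neg_re]
    rw [this, hcre]; linarith
  set γ : ℝ := w.re / β with hγ
  have hγ0 : 0 < γ := div_pos hwre hβ0
  have hcreγ : ∀ x : ℝ, c.re * x / β = -γ * x := by
    intro x
    have : c.re = -w.re := by rw [hwdef, Complex.neg_re]; ring
    rw [this, hγ]; ring
  set E : ℝ → ℂ := fun t => Complex.exp (c * ((t ^ β : ℝ) : ℂ) / (1 + (α:ℂ))) with hE
  set g : ℕ → ℝ → ℂ :=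
    fun n t => ((-l) ^ n / (n.factorial : ℂ)) * (t:ℂ) ^ n * E t with hg
  have hβc : ((1:ℂ) + (α:ℂ)) = ((β : ℝ) : ℂ) := by rw [hβ]; push_cast; ring
  -- pointwise sum
  have hps : ∀ t : ℝ, HasSum (fun n => g n t) (Complex.exp (-l * t) * E t) := by
    intro t
    have h0 : HasSum (fun n : ℕ => (-l * t) ^ n / (n.factorial : ℂ))
        (Complex.exp (-l * t)) := by
      rw [Complex.exp_eq_exp_ℂ]
      exact NormedSpace.expSeries_div_hasSum_exp (-l * (t:ℂ))
    have h1 := h0.mul_right (E t)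
    have heq : (fun n : ℕ => (-l * (t:ℂ)) ^ n / (n.factorial : ℂ) * E t) = fun n => g n t := by
      funext n; rw [hg]; ring
    exact heq ▸ h1
  -- continuity
  have hcont_rpow : Continuous fun t : ℝ => t ^ β :=
    continuous_iff_continuousAt.mpr fun x => Real.continuousAt_rpow_const x β (Or.inr hβ0.le)
  have hEcont : Continuous E := by
    rw [hE]
    exact Complex.continuous_exp.comp
      (((continuous_const.mul (Complex.continuous_ofReal.comp hcont_rpow)).div_const _))
  have hgcont : ∀ n, Continuous (g n) := by
    intro n
    rw [hg]
    exact (continuous_const.mul ((Complex.continuous_ofReal.pow n))).mul hEcont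
  -- norm of E
  have hEnorm : ∀ t : ℝ, ‖E t‖ = Real.exp (-γ * t ^ β) := by
    intro t
    rw [hE]
    simp only
    rw [Complex.norm_exp]
    congr 1
    rw [hβc]
    rw [Complex.div_ofReal]
    have : (c * ((t ^ β : ℝ) : ℂ)).re = c.re * t ^ β := by
      simp [Complex.mul_re]
    simp only [Complex.ofReal_re]
    rw [this]
    exact hcreγ _
  -- norm of g
  have hnorm : ∀ (n : ℕ) (t : ℝ), 0 < t →
      ‖g n t‖ = ‖l‖ ^ n / (n.factorial : ℝ) * (t ^ n * Real.exp (-γ * t ^ β)) := by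
    intro n t ht
    rw [hg]
    simp only
    rw [norm_mul, norm_mul, norm_div, norm_pow, norm_neg, hEnorm]
    rw [Complex.norm_natCast, norm_pow, Complex.norm_real, Real.norm_eq_abs,
      abs_of_pos ht]
    ring
  -- integrability of each g n
  have hInt : ∀ n, IntegrableOn (g n) (Set.Ioi 0) := by
    intro n
    have hb : IntegrableOn (fun t : ℝ => ‖l‖ ^ n / (n.factorial : ℝ) *
        (t ^ ((n:ℕ):ℝ) * Real.exp (-γ * t ^ β))) (Set.Ioi 0) := by
      refine Integrable.const_mul ?_ _
      exact integrableOn_rpow_mul_exp_neg_mul_rpow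
        (lt_of_lt_of_le neg_one_lt_zero (Nat.cast_nonneg n)) (by linarith) hγ0
    refine Integrable.mono' hb ((hgcont n).aestronglyMeasurable) ?_
    filter_upwards [ae_restrict_mem measurableSet_Ioi] with t ht
    rw [hnorm n t ht, Real.rpow_natCast]
  -- epsilon and the master integrable bound
  set ε : ℝ := 2 * ‖l‖ + 1 with hεdef
  have hε0 : 0 < ε := by positivity
  have hC : IntegrableOn (fun t : ℝ => Real.exp (ε * t) * Real.exp (-γ * t ^ β))
      (Set.Ioi 0) := by
    set T : ℝ := max 1 ((ε + 1) / γ) with hT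
    have hT1 : (1:ℝ) ≤ T := le_max_left _ _
    have hT0 : (0:ℝ) < T := lt_of_lt_of_le one_pos hT1
    have hfc : Continuous fun t : ℝ => Real.exp (ε * t) * Real.exp (-γ * t ^ β) :=
      (Real.continuous_exp.comp (continuous_const.mul continuous_id)).mul
        (Real.continuous_exp.comp (continuous_const.mul hcont_rpow))
    have h1 : IntegrableOn (fun t : ℝ => Real.exp (ε * t) * Real.exp (-γ * t ^ β))
        (Set.Ioc 0 T) := hfc.integrableOn_Ioc
    have h2 : IntegrableOn (fun t : ℝ => Real.exp (ε * t) * Real.exp (-γ * t ^ β))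
        (Set.Ioi T) := by
      refine Integrable.mono' (exp_neg_integrableOn_Ioi T (by norm_num : (0:ℝ) < 1))
        (hfc.aestronglyMeasurable) ?_
      filter_upwards [ae_restrict_mem measurableSet_Ioi] with t ht
      have ht1 : (1:ℝ) ≤ t := le_of_lt (lt_of_le_of_lt hT1 ht)
      have ht0 : (0:ℝ) < t := lt_of_lt_of_le one_pos ht1
      have htT : (ε + 1) / γ ≤ t := le_of_lt (lt_of_le_of_lt (le_max_right _ _) ht)
      rw [Real.norm_eq_abs, abs_of_pos (by positivity), ← Real.exp_add]
      rw [Real.exp_le_exp]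
      have hsq : t ^ (2:ℝ) ≤ t ^ β :=
        Real.rpow_le_rpow_of_exponent_le ht1 (by linarith)
      have ht2 : t ^ (2:ℝ) = t * t := by
        rw [show (2:ℝ) = ((2:ℕ):ℝ) by norm_num, Real.rpow_natCast]; ring
      have hγt : ε + 1 ≤ t * γ := (div_le_iff₀ hγ0).mp htT
      have key : (ε + 1) * t ≤ γ * t ^ β := by
        have h3 : (ε + 1) * t ≤ γ * (t * t) := by nlinarith
        have h4 : γ * (t * t) ≤ γ * t ^ β := by
          rw [← ht2]; exact mul_le_mul_of_nonneg_left hsq hγ0.le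
        linarith
      nlinarith
    have := h1.union h2
    rwa [Set.Ioc_union_Ioi_eq_Ioi hT0.le] at this
  -- summability of the integrals of norms
  have hSum : Summable fun n : ℕ => ∫ t in Set.Ioi (0:ℝ), ‖g n t‖ := by
    set C : ℝ := ∫ t in Set.Ioi (0:ℝ), Real.exp (ε * t) * Real.exp (-γ * t ^ β) with hCdef
    have hrat : ‖l‖ / ε < 1 := by
      rw [div_lt_one hε0]; rw [hεdef]
      have := norm_nonneg l; linarith
    have hrat0 : (0:ℝ) ≤ ‖l‖ / ε := by positivity
    refine Summable.of_nonneg_of_le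
      (fun n => MeasureTheory.integral_nonneg fun t => norm_nonneg _)
      (fun n => ?_)
      (((summable_geometric_of_lt_one hrat0 hrat).mul_right C))
    calc (∫ t in Set.Ioi (0:ℝ), ‖g n t‖)
        ≤ ∫ t in Set.Ioi (0:ℝ),
            (‖l‖ / ε) ^ n * (Real.exp (ε * t) * Real.exp (-γ * t ^ β)) := by
          refine setIntegral_mono_on (hInt n).norm (hC.const_mul _) measurableSet_Ioi ?_
          intro t ht
          have ht0 : (0:ℝ) < t := ht
          rw [hnorm n t ht0]
          have hX : (0:ℝ) ≤ Real.exp (-γ * t ^ β) := (Real.exp_pos _).le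
          have h1 : (ε * t) ^ n / (n.factorial : ℝ) ≤ Real.exp (ε * t) := by
            refine le_trans ?_ (Real.sum_le_exp_of_nonneg (by positivity) (n+1))
            exact Finset.single_le_sum
              (f := fun i => (ε * t) ^ i / (i.factorial : ℝ))
              (fun i _ => by positivity) (Finset.self_mem_range_succ n)
          have h3 : t ^ n ≤ Real.exp (ε * t) * (n.factorial : ℝ) / ε ^ n := by
            rw [div_le_iff₀ (by positivity)] at h1
            rw [mul_pow] at h1
            rw [le_div_iff₀ (by positivity)]
            nlinarith [h1]
          calc ‖l‖ ^ n / (n.factorial : ℝ) * (t ^ n * Real.exp (-γ * t ^ β))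
              ≤ ‖l‖ ^ n / (n.factorial : ℝ) *
                ((Real.exp (ε * t) * (n.factorial : ℝ) / ε ^ n) * Real.exp (-γ * t ^ β)) := by
                gcongr
            _ = (‖l‖ / ε) ^ n * (Real.exp (ε * t) * Real.exp (-γ * t ^ β)) := by
                have hf0 : ((n.factorial : ℝ)) ≠ 0 := by positivity
                field_simp [div_pow]
                rw [← mul_pow]; congr 1; field_simp
      _ = (‖l‖ / ε) ^ n * C := by rw [hCdef, MeasureTheory.integral_const_mul]
  -- exchange sum and integral
  have H := MeasureTheory.hasSum_integral_of_summable_integral_norm hInt hSum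
  have hfun : (fun t : ℝ => ∑' n, g n t) = fun t : ℝ => Complex.exp (-l * t) * E t :=
    funext fun t => (hps t).tsum_eq
  have hFa : (∫ t in Set.Ioi (0:ℝ), ∑' n, g n t) = Fa α l := by
    rw [hfun]
    simp only [Fa, hE, hc, hβ]
  rw [hFa] at H
  -- evaluate each integral
  have hwβre : 0 < (w / ((β:ℝ):ℂ)).re := by
    rw [Complex.div_ofReal]
    exact div_pos hwre hβ0
  set θ : ℝ := (α - 2) * Real.pi / 2 with hθ
  have hwexp : w = Complex.exp ((θ:ℂ) * Complex.I) := by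
    have h1 : ((θ:ℝ):ℂ) * Complex.I
        = ((Real.pi * α / 2 : ℝ):ℂ) * Complex.I + -((Real.pi:ℂ) * Complex.I) := by
      rw [hθ]; push_cast; ring
    rw [hwdef, hc_eq, h1, Complex.exp_add, Complex.exp_neg, Complex.exp_pi_mul_I]
    norm_num
  have hwβ : w / ((β:ℝ):ℂ) = Complex.exp ((θ:ℂ) * Complex.I - (Real.log β : ℂ)) := by
    rw [Complex.exp_sub, hwexp]
    rw [← Complex.ofReal_exp, Real.exp_log hβ0]
  have hθlb : -Real.pi < θ := by rw [hθ]; nlinarith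
  have hθub : θ ≤ Real.pi := by rw [hθ]; nlinarith
  have hlog : Complex.log (w / ((β:ℝ):ℂ)) = (θ:ℂ) * Complex.I - (Real.log β : ℂ) := by
    rw [hwβ, Complex.log_exp] <;> simp [hθlb, hθub]
  have hEval : ∀ n : ℕ, (∫ t in Set.Ioi (0:ℝ), g n t)
      = (1 / (1 + (α : ℂ))) * ((-1 : ℂ) ^ n / n.factorial) * l ^ n *
          (Real.Gamma (((n : ℝ) + 1) / (α + 1)) : ℂ) *
          Complex.exp (Complex.I * Real.pi * (2 - α) * ((n : ℝ) + 1) / (2 * (α + 1))) *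
          ((β ^ (((n : ℝ) + 1) / (α + 1)) : ℝ) : ℂ) := by
    intro n
    set q : ℝ := ((n:ℝ) + 1) / β with hq
    have hq0 : 0 < q := div_pos (by positivity) hβ0
    set φ : ℝ → ℂ := fun u => (1/((β:ℝ):ℂ)) *
      ((u:ℂ) ^ ((q:ℂ) - 1) * Complex.exp (-(w / ((β:ℝ):ℂ) * u))) with hφ
    -- the substitution t ↦ t^β
    have hsub : (∫ t in Set.Ioi (0:ℝ), (t:ℂ) ^ n * E t)
        = (1/((β:ℝ):ℂ)) * ((w / ((β:ℝ):ℂ)) ^ (-(q:ℂ)) * Complex.Gamma (q:ℂ)) := by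
      have hA : ∀ t ∈ Set.Ioi (0:ℝ), (t:ℂ) ^ n * E t = (β * t ^ (β - 1)) • φ (t ^ β) := by
        intro t ht
        have ht0 : (0:ℝ) < t := ht
        simp only [hφ]
        have hqc : ((q:ℂ) - 1) = ((q - 1 : ℝ) : ℂ) := by push_cast; ring
        rw [hqc, ← Complex.ofReal_cpow (Real.rpow_nonneg ht0.le β)]
        have harg : -(w / ((β:ℝ):ℂ) * ((t ^ β : ℝ) : ℂ))
            = c * ((t ^ β : ℝ) : ℂ) / (1 + (α:ℂ)) := by
          rw [hwdef, hβc]; ring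
        rw [harg]
        have hreal : t ^ (β - 1) * (t ^ β) ^ (q - 1) = (t:ℝ) ^ n := by
          rw [← Real.rpow_natCast t n, ← Real.rpow_mul ht0.le, ← Real.rpow_add ht0]
          congr 1
          rw [hq]
          field_simp
          ring
        have hrealℂ := congrArg (Complex.ofReal) hreal
        push_cast at hrealℂ
        simp only [hE]
        rw [Complex.real_smul]
        push_cast
        rw [← hrealℂ]
        have hβne : ((β:ℝ):ℂ) ≠ 0 := Complex.ofReal_ne_zero.mpr hβ0.ne'
        field_simp
        try ring
      rw [setIntegral_congr_fun measurableSet_Ioi hA,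
        MeasureTheory.integral_comp_rpow_Ioi_of_pos hβ0]
      simp only [hφ]
      rw [MeasureTheory.integral_const_mul,
        key_integral q hq0 (w := w / ((β:ℝ):ℂ)) hwβre]
    -- the phase
    have hpow : (w / ((β:ℝ):ℂ)) ^ (-(q:ℂ))
        = Complex.exp (((q * ((2 - α) * Real.pi / 2) : ℝ):ℂ) * Complex.I)
          * ((β ^ q : ℝ) : ℂ) := by
      rw [Complex.cpow_def_of_ne_zero (by rw [hwβ]; exact Complex.exp_ne_zero _), hlog]
      rw [show ((θ:ℂ) * Complex.I - (Real.log β : ℂ)) * (-(q:ℂ))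
          = ((q * ((2 - α) * Real.pi / 2) : ℝ):ℂ) * Complex.I
            + ((q * Real.log β : ℝ):ℂ) by rw [hθ]; push_cast; ring]
      rw [Complex.exp_add]
      congr 1
      rw [← Complex.ofReal_exp]
      norm_cast
      rw [Real.rpow_def_of_pos hβ0, mul_comm]
    -- assemble
    have hgsplit : ∀ t : ℝ, g n t = ((-l) ^ n / (n.factorial : ℂ)) * ((t:ℂ) ^ n * E t) := by
      intro t; rw [hg]; ring
    calc (∫ t in Set.Ioi (0:ℝ), g n t)
        = ((-l) ^ n / (n.factorial : ℂ)) * ∫ t in Set.Ioi (0:ℝ), (t:ℂ) ^ n * E t := by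
          rw [← MeasureTheory.integral_const_mul]
          exact MeasureTheory.setIntegral_congr_fun measurableSet_Ioi fun t _ => hgsplit t
      _ = _ := by
          rw [hsub, hpow, Complex.Gamma_ofReal q]
          have hq' : (((n:ℝ) + 1) / (α + 1)) = q := by rw [hq, hβ, add_comm α 1]
          rw [hq']
          have hexp : Complex.exp (Complex.I * Real.pi * (2 - α) * ((n : ℝ) + 1) / (2 * (α + 1)))
              = Complex.exp (((q * ((2 - α) * Real.pi / 2) : ℝ):ℂ) * Complex.I) := by
            congr 1
            have hne : ((α:ℂ) + 1) ≠ 0 := by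
              intro h
              have h2 := congrArg Complex.re h
              simp at h2
              linarith
            rw [hq, hβ]
            push_cast
            have hne2 : (1:ℂ) + (α:ℂ) ≠ 0 := by
              intro h
              have h2 := congrArg Complex.re h
              simp at h2
              linarith
            field_simp [hne, hne2]
            ring
          rw [hexp, ← hβc, neg_pow]
          ring
  exact (funext hEval) ▸ H
end
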